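/- arXiv:0903.2779 — 4 statements merged into one kernel-verified Lean document; each statement's English description precedes it below -/
import Mathlib

section
/- A module M over a ring R is strongly Gorenstein projective if and only if there exists a short exact sequence 0 → M → P → M → 0 with P projective and Ext^1_R(M, Q) = 0 for every projective R-module Q. -/
open CategoryTheory

noncomputable section

namespace GW

variable (R : Type) [CommRing R]

/-- `M` is a Gorenstein projective module: there is a doubly infinite exact sequence of
projective modules, remaining exact under `Hom(-, Q)` for every projective `Q`, with `M`
isomorphic to one of its kernels (equivalently, images). -/
def IsGProj (M : ModuleCat.{0} R) : Prop :=
  ∃ (P : ℤ → ModuleCat.{0} R) (d : ∀ i, P i →ₗ[R] P (i + 1)),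
    (∀ i, Module.Projective R (P i)) ∧
    (∀ i, Function.Exact (d i) (d (i + 1))) ∧
    (∀ (Q : ModuleCat.{0} R), Module.Projective R Q →
      ∀ i, Function.Exact
        (fun g : P (i + 1 + 1) →ₗ[R] Q => g.comp (d (i + 1)))
        (fun g : P (i + 1) →ₗ[R] Q => g.comp (d i))) ∧
    Nonempty (M ≃ₗ[R] LinearMap.ker (d 0))

/-- `M` is a strongly Gorenstein projective module. -/
def IsSGProj (M : ModuleCat.{0} R) : Prop :=
  ∃ (P : ModuleCat.{0} R) (f : P →ₗ[R] P),
    Module.Projective R P ∧ Function.Exact f f ∧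
    (∀ (Q : ModuleCat.{0} R), Module.Projective R Q →
      Function.Exact (fun g : P →ₗ[R] Q => g.comp f) (fun g : P →ₗ[R] Q => g.comp f)) ∧
    Nonempty (M ≃ₗ[R] LinearMap.range f)

/-- Gorenstein projective dimension at most `n`, via resolutions by Gorenstein projectives. -/
def gpdLE : ℕ → ModuleCat.{0} R → Prop
  | 0, M => IsGProj R M
  | (n + 1), M => ∃ (K G : ModuleCat.{0} R) (f : K →ₗ[R] G) (g : G →ₗ[R] M),
      IsGProj R G ∧ Function.Injective f ∧ Function.Surjective g ∧
      Function.Exact f g ∧ gpdLE n K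

/-- Gorenstein projective dimension, valued in `ℕ∞`. -/
def gpd (M : ModuleCat.{0} R) : ℕ∞ := ⨅ (n : ℕ) (_ : gpdLE R n M), (n : ℕ∞)

/-- `M` is a Gorenstein flat module. -/
def IsGFlat (M : ModuleCat.{0} R) : Prop :=
  ∃ (F : ℤ → ModuleCat.{0} R) (d : ∀ i, F i →ₗ[R] F (i + 1)),
    (∀ i, Module.Flat R (F i)) ∧
    (∀ i, Function.Exact (d i) (d (i + 1))) ∧
    (∀ (I : ModuleCat.{0} R), Module.Injective R I →
      ∀ i, Function.Exact (LinearMap.lTensor I (d i)) (LinearMap.lTensor I (d (i + 1)))) ∧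
    Nonempty (M ≃ₗ[R] LinearMap.ker (d 0))

/-- Gorenstein flat dimension at most `n`. -/
def gfdLE : ℕ → ModuleCat.{0} R → Prop
  | 0, M => IsGFlat R M
  | (n + 1), M => ∃ (K G : ModuleCat.{0} R) (f : K →ₗ[R] G) (g : G →ₗ[R] M),
      IsGFlat R G ∧ Function.Injective f ∧ Function.Surjective g ∧
      Function.Exact f g ∧ gfdLE n K

/-- Gorenstein flat dimension, valued in `ℕ∞`. -/
def gfd (M : ModuleCat.{0} R) : ℕ∞ := ⨅ (n : ℕ) (_ : gfdLE R n M), (n : ℕ∞)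

/-- The Gorenstein weak dimension of `R`: the supremum of Gorenstein flat dimensions. -/
def gwdim : ℕ∞ := ⨆ M : ModuleCat.{0} R, gfd R M

/-- Projective dimension at most `n`. -/
def pdLE : ℕ → ModuleCat.{0} R → Prop
  | 0, M => Module.Projective R M
  | (n + 1), M => ∃ (K G : ModuleCat.{0} R) (f : K →ₗ[R] G) (g : G →ₗ[R] M),
      Module.Projective R G ∧ Function.Injective f ∧ Function.Surjective g ∧
      Function.Exact f g ∧ pdLE n K

/-- Projective dimension, valued in `ℕ∞`. -/
def pd (M : ModuleCat.{0} R) : ℕ∞ := ⨅ (n : ℕ) (_ : pdLE R n M), (n : ℕ∞)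

/-- Flat dimension at most `n`. -/
def fdLE : ℕ → ModuleCat.{0} R → Prop
  | 0, M => Module.Flat R M
  | (n + 1), M => ∃ (K G : ModuleCat.{0} R) (f : K →ₗ[R] G) (g : G →ₗ[R] M),
      Module.Flat R G ∧ Function.Injective f ∧ Function.Surjective g ∧
      Function.Exact f g ∧ fdLE n K

/-- Flat dimension, valued in `ℕ∞`. -/
def fd (M : ModuleCat.{0} R) : ℕ∞ := ⨅ (n : ℕ) (_ : fdLE R n M), (n : ℕ∞)

/-- A coherent ring: every finitely generated ideal is finitely presented. -/
def IsCoherentRing : Prop := ∀ I : Ideal R, I.FG → Module.FinitePresentation R I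

/-- `Ext^n_R(M, N)` as a module. -/
def extGrp (n : ℕ) (M N : ModuleCat.{0} R) : ModuleCat R :=
  ((Ext R (ModuleCat.{0} R) n).obj (Opposite.op M)).obj N

/-- `Tor_n^R(M, N)`. -/
def torGrp (n : ℕ) (M N : ModuleCat.{0} R) : ModuleCat.{0} R :=
  ((Tor (ModuleCat.{0} R) n).obj M).obj N

/-- The Gorenstein global dimension of `R` (the common value of the suprema of Gorenstein
projective and Gorenstein injective dimensions), here the supremum of `Gpd`. -/
def ggldim : ℕ∞ := ⨆ M : ModuleCat.{0} R, gpd R M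

/-- `M` admits a finite resolution of length `n` by finitely generated projective modules. -/
def finFGRes : ℕ → ModuleCat.{0} R → Prop
  | 0, M => Module.Projective R M ∧ Module.Finite R M
  | (n + 1), M => ∃ (K G : ModuleCat.{0} R) (f : K →ₗ[R] G) (g : G →ₗ[R] M),
      Module.Projective R G ∧ Module.Finite R G ∧ Function.Injective f ∧
      Function.Surjective g ∧ Function.Exact f g ∧ finFGRes n K

/-- The small finitistic projective dimension of `R`. -/
def fPD : ℕ∞ :=
  ⨆ (M : ModuleCat.{0} R) (_ : (∃ n, finFGRes R n M) ∧ pd R M ≠ ⊤), pd R M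

/-- The small finitistic Gorenstein projective dimension of `R`. -/
def fGPD : ℕ∞ :=
  ⨆ (M : ModuleCat.{0} R) (_ : (∃ n, finFGRes R n M) ∧ gpd R M ≠ ⊤), gpd R M

/-- An arithmetical ring: every finitely generated ideal is locally principal. -/
def IsArithmetical : Prop :=
  ∀ I : Ideal R, I.FG → ∀ (p : Ideal R) (hp : p.IsMaximal),
    haveI := hp.isPrime
    (I.map (algebraMap R (Localization.AtPrime p))).IsPrincipal

/-- A quasi-Frobenius ring: Noetherian and self-injective. -/
def IsQuasiFrobenius : Prop := IsNoetherianRing R ∧ Module.Injective R R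

/-- The submodule `X • N` of a module `N` over a power series ring. -/
def Xsub {R : Type} [CommRing R] (N : ModuleCat.{0} (PowerSeries R)) :
    Submodule (PowerSeries R) N :=
  LinearMap.range (LinearMap.lsmul (PowerSeries R) N PowerSeries.X)

lemma Xsub_le {R : Type} [CommRing R] {N N' : ModuleCat.{0} (PowerSeries R)}
    (f : N →ₗ[PowerSeries R] N') : Xsub N ≤ (Xsub N').comap f := by
  rintro x ⟨k, rfl⟩
  exact ⟨f k, (map_smul f _ _).symm⟩

/-- The induced map `N/XN → N'/XN'`. -/
def qmap {R : Type} [CommRing R] {N N' : ModuleCat.{0} (PowerSeries R)}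
    (f : N →ₗ[PowerSeries R] N') :
    (N ⧸ Xsub N) →ₗ[PowerSeries R] (N' ⧸ Xsub N') :=
  Submodule.mapQ _ _ f (Xsub_le f)

end GW

section SG4Aux

open CategoryTheory Limits

variable {R : Type} [CommRing R] {M P Q : ModuleCat.{0} R}

lemma sg4_descend (f : M →ₗ[R] P) (g : P →ₗ[R] M) (hg : Function.Surjective g)
    (hfg : Function.Exact f g) (h : P →ₗ[R] Q) (hh : h ∘ₗ f = 0) :
    ∃ u : M →ₗ[R] Q, u ∘ₗ g = h := by
  have hle : LinearMap.ker g ≤ LinearMap.ker h := by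
    intro x hx
    obtain ⟨m, rfl⟩ := (hfg x).1 hx
    simpa using LinearMap.congr_fun hh m
  refine ⟨(LinearMap.ker g).liftQ h hle ∘ₗ (g.quotKerEquivOfSurjective hg).symm.toLinearMap, ?_⟩
  ext x
  have h1 : (g.quotKerEquivOfSurjective hg).symm (g x) = Submodule.Quotient.mk x := by
    apply (g.quotKerEquivOfSurjective hg).injective
    simp [LinearMap.quotKerEquivOfSurjective, LinearMap.quotKerEquivRange]
  simp [h1]

variable (f : M →ₗ[R] P) (g : P →ₗ[R] M)

def sg4cpx (hfg : Function.Exact f g) : ChainComplex (ModuleCat.{0} R) ℕ :=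
  ChainComplex.of (fun _ => P) (fun _ => ModuleCat.ofHom (f ∘ₗ g))
    (fun _ => by
      ext x
      simpa using congrArg f (hfg.apply_apply_eq_zero (g x)))

lemma sg4cpx_d (hfg : Function.Exact f g) (n : ℕ) :
    (sg4cpx f g hfg).d (n+1) n = ModuleCat.ofHom (f ∘ₗ g) :=
  ChainComplex.of_d (fun _ => P) (fun _ => ModuleCat.ofHom (f ∘ₗ g)) n

lemma sg4cpx_key (hg : Function.Surjective g) (hfg : Function.Exact f g) :
    ∀ x : P, g x = 0 → ∃ y : P, f (g y) = x := by
  intro x hx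
  obtain ⟨m, rfl⟩ := (hfg x).1 hx
  obtain ⟨p, rfl⟩ := hg m
  exact ⟨p, rfl⟩

def sg4res (hP : Module.Projective R P) (hf : Function.Injective f)
    (hg : Function.Surjective g) (hfg : Function.Exact f g) :
    ProjectiveResolution M where
  complex := sg4cpx f g hfg
  projective n := by
    change Projective P
    exact @ModuleCat.projective_of_categoryTheory_projective R _ P hP
  π := (ChainComplex.toSingle₀Equiv _ _).symm ⟨ModuleCat.ofHom g, by
    rw [show (sg4cpx f g hfg).d 1 0 = ModuleCat.ofHom (f ∘ₗ g) from sg4cpx_d f g hfg 0]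
    ext x
    exact hfg.apply_apply_eq_zero (g x)⟩
  quasiIso := ⟨fun n => by
    rcases n with _ | n
    · rw [ChainComplex.quasiIsoAt₀_iff, ShortComplex.quasiIso_iff_of_zeros']
      · constructor
        · rw [ShortComplex.moduleCat_exact_iff]
          intro x hx
          have hx' : g x = 0 := by
            exact hx
          obtain ⟨y, hy⟩ := sg4cpx_key f g hg hfg x hx'
          exact ⟨y, hy⟩
        · rw [ModuleCat.epi_iff_surjective]
          intro m
          obtain ⟨p, hp⟩ := hg m
          exact ⟨p, hp⟩
      all_goals
        dsimp [HomologicalComplex.shortComplexFunctor']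
      exact HomologicalComplex.shape _ _ _ (by simp)
      all_goals rfl
    · rw [quasiIsoAt_iff_exactAt']
      · rw [HomologicalComplex.exactAt_iff' _ (n+2) (n+1) n (by simp) (by simp),
          ShortComplex.moduleCat_exact_iff]
        intro x hx
        have hd1 : (sg4cpx f g hfg).d (n+2) (n+1) = ModuleCat.ofHom (f ∘ₗ g) :=
          ChainComplex.of_d (fun _ => P) (fun _ => ModuleCat.ofHom (f ∘ₗ g)) (n+1)
        have hd2 : (sg4cpx f g hfg).d (n+1) n = ModuleCat.ofHom (f ∘ₗ g) :=
          ChainComplex.of_d (fun _ => P) (fun _ => ModuleCat.ofHom (f ∘ₗ g)) n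
        have hx' : g x = 0 := hf (by simp [hd2] at hx; rw [map_zero]; exact hx)
        obtain ⟨y, hy⟩ := sg4cpx_key f g hg hfg x hx'
        exact ⟨y, by simp [hd1]; exact hy⟩
      · apply ChainComplex.exactAt_succ_single_obj⟩



lemma sg4_subsingleton_iff_isZero (X : ModuleCat.{0} R) : Subsingleton X ↔ Limits.IsZero X := by
  constructor
  · intro h
    exact ModuleCat.isZero_of_subsingleton X
  · intro h
    have h0 : (𝟙 X : X ⟶ X) = 0 := h.eq_of_src _ _
    refine ⟨fun a b => ?_⟩
    have ha : a = (0 : X ⟶ X) a := by rw [← h0]; rfl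
    have hb : b = (0 : X ⟶ X) b := by rw [← h0]; rfl
    rw [ha, hb]; simp

lemma sg4_key (hP : Module.Projective R P) (hf : Function.Injective f)
    (hg : Function.Surjective g) (hfg : Function.Exact f g) (Q : ModuleCat.{0} R) :
    Subsingleton (GW.extGrp R 1 M Q) ↔
      ∀ u : M →ₗ[R] Q, ∃ v : P →ₗ[R] Q, v ∘ₗ f = u := by
  rw [sg4_subsingleton_iff_isZero]
  rw [show GW.extGrp R 1 M Q = ((Ext R (ModuleCat.{0} R) 1).obj (Opposite.op M)).obj Q from rfl]
  rw [Iso.isZero_iff ((sg4res f g hP hf hg hfg).isoExt 1 Q),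
    ← HomologicalComplex.exactAt_iff_isZero_homology,
    HomologicalComplex.exactAt_iff' _ 0 1 2 (by simp) (by simp),
    ShortComplex.moduleCat_exact_iff]
  set K := (sg4res f g hP hf hg hfg).complex with hK
  have hd21 : K.d 2 1 = ModuleCat.ofHom (f ∘ₗ g) := sg4cpx_d f g hfg 1
  have hd10 : K.d 1 0 = ModuleCat.ofHom (f ∘ₗ g) := sg4cpx_d f g hfg 0
  have hscg : ∀ x₂ : ↑(HomologicalComplex.sc' (K.linearYonedaObj R Q) 0 1 2).X₂,
      (HomologicalComplex.sc' (K.linearYonedaObj R Q) 0 1 2).g x₂ = K.d 2 1 ≫ (x₂ : P ⟶ Q) :=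
    fun _ => rfl
  have hscf : ∀ x₁ : ↑(HomologicalComplex.sc' (K.linearYonedaObj R Q) 0 1 2).X₁,
      (HomologicalComplex.sc' (K.linearYonedaObj R Q) 0 1 2).f x₁ = K.d 1 0 ≫ (x₁ : P ⟶ Q) :=
    fun _ => rfl
  constructor
  · intro H u
    have h0 : (HomologicalComplex.sc' (K.linearYonedaObj R Q) 0 1 2).g (ModuleCat.ofHom (u ∘ₗ g)) = 0 := by
      refine (hscg _).trans ?_
      rw [hd21]
      show ModuleCat.ofHom (f ∘ₗ g) ≫ ModuleCat.ofHom (u ∘ₗ g) = (0 : P ⟶ Q)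
      ext x
      simpa using congrArg u (hfg.apply_apply_eq_zero (g x))
    obtain ⟨v, hv⟩ := H (ModuleCat.ofHom (u ∘ₗ g)) h0
    rw [hscf, hd10] at hv
    have hv' : (v : P ⟶ Q).hom ∘ₗ (f ∘ₗ g) = u ∘ₗ g := congrArg ModuleCat.Hom.hom hv
    refine ⟨(v : P ⟶ Q).hom, ?_⟩
    ext m
    obtain ⟨p, rfl⟩ := hg m
    exact LinearMap.congr_fun hv' p
  · intro H h hh
    rw [hscg, hd21] at hh
    have hh' : (h : P ⟶ Q).hom ∘ₗ (f ∘ₗ g) = 0 := congrArg ModuleCat.Hom.hom hh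
    have hhf : (h : P ⟶ Q).hom ∘ₗ f = 0 := by
      ext m
      obtain ⟨p, rfl⟩ := hg m
      exact LinearMap.congr_fun hh' p
    obtain ⟨u, hu⟩ := sg4_descend f g hg hfg (h : P ⟶ Q).hom hhf
    obtain ⟨v, hv⟩ := H u
    refine ⟨ModuleCat.ofHom v, ?_⟩
    refine (hscf _).trans ?_
    rw [hd10]
    show ModuleCat.ofHom (f ∘ₗ g) ≫ ModuleCat.ofHom v = (h : P ⟶ Q)
    ext x
    exact ((LinearMap.congr_fun hv (g x)).trans (LinearMap.congr_fun hu x) :)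

end SG4Aux


/-- `M` is strongly Gorenstein projective iff there is a short exact sequence
`0 → M → P → M → 0` with `P` projective and `Ext¹(M, Q) = 0` for every projective `Q`. -/
theorem stmt4 (R : Type) [CommRing R] (M : ModuleCat.{0} R) :
    GW.IsSGProj R M ↔
      ∃ (P : ModuleCat.{0} R) (f : M →ₗ[R] P) (g : P →ₗ[R] M),
        Module.Projective R P ∧ Function.Injective f ∧ Function.Surjective g ∧
        Function.Exact f g ∧
        (∀ Q : ModuleCat.{0} R, Module.Projective R Q →
          Subsingleton ↥(GW.extGrp R 1 M Q)) := by
  constructor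
  · rintro ⟨P, F, hP, hFF, hhom, ⟨e⟩⟩
    set ι : (LinearMap.range F : Submodule R P) →ₗ[R] P := (LinearMap.range F).subtype with hι
    set π : (P : Type) →ₗ[R] (LinearMap.range F : Submodule R P) := F.rangeRestrict with hπ
    have hFF' : LinearMap.ker F = LinearMap.range F := LinearMap.exact_iff.mp hFF
    have hinj : Function.Injective (ι ∘ₗ (e : M →ₗ[R] LinearMap.range F)) := by
      rw [LinearMap.coe_comp]
      exact (Submodule.injective_subtype _).comp e.injective
    have hsurj : Function.Surjective ((e.symm : LinearMap.range F →ₗ[R] M) ∘ₗ π) := by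
      rw [LinearMap.coe_comp]
      exact e.symm.surjective.comp F.surjective_rangeRestrict
    have hexact : Function.Exact (ι ∘ₗ (e : M →ₗ[R] LinearMap.range F))
        ((e.symm : LinearMap.range F →ₗ[R] M) ∘ₗ π) := by
      rw [LinearMap.exact_iff]
      have h1 : LinearMap.ker ((e.symm : LinearMap.range F →ₗ[R] M) ∘ₗ π)
          = LinearMap.ker F := by
        rw [LinearMap.ker_comp, LinearEquiv.ker, Submodule.comap_bot,
          LinearMap.ker_rangeRestrict]
      have h2 : LinearMap.range (ι ∘ₗ (e : M →ₗ[R] LinearMap.range F))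
          = LinearMap.range F := by
        rw [LinearMap.range_comp, LinearEquiv.range, Submodule.map_subtype_top]
      rw [h1, h2, hFF']
    refine ⟨P, ι ∘ₗ (e : M →ₗ[R] LinearMap.range F),
      (e.symm : LinearMap.range F →ₗ[R] M) ∘ₗ π, hP, hinj, hsurj, hexact, ?_⟩
    intro Q hQ
    rw [sg4_key _ _ hP hinj hsurj hexact Q]
    intro u
    set u' : (LinearMap.range F : Submodule R P) →ₗ[R] Q
      := u ∘ₗ (e.symm : LinearMap.range F →ₗ[R] M) with hu'
    have hh0 : (u' ∘ₗ π) ∘ₗ F = 0 := by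
      ext x
      have : π (F x) = 0 :=
        Subtype.ext (show F (F x) = 0 from hFF.apply_apply_eq_zero x)
      simp only [LinearMap.comp_apply, this, map_zero, LinearMap.zero_apply]
    obtain ⟨v, hv⟩ := (hhom Q hQ (u' ∘ₗ π)).mp hh0
    refine ⟨v, ?_⟩
    have hval : ∀ s : (LinearMap.range F : Submodule R P), v (ι s) = u' s := by
      rintro ⟨-, y, rfl⟩
      have h3 := LinearMap.congr_fun hv y
      have h4 : π y = ⟨F y, y, rfl⟩ := rfl
      simpa [h4, hι] using h3
    ext m
    have h5 := hval (e m)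
    rw [hu'] at h5
    simpa using h5
  · rintro ⟨P, f, g, hP, hf, hg, hfg, hext⟩
    have hrange : LinearMap.range (f ∘ₗ g) = LinearMap.range f := by
      rw [LinearMap.range_comp, LinearMap.range_eq_top.mpr hg, Submodule.map_top]
    have hker : LinearMap.ker (f ∘ₗ g) = LinearMap.ker g := by
      rw [LinearMap.ker_comp, LinearMap.ker_eq_bot.mpr hf, Submodule.comap_bot]
    have hFF : Function.Exact (f ∘ₗ g) (f ∘ₗ g) := by
      rw [LinearMap.exact_iff, hrange, hker, LinearMap.exact_iff.mp hfg]
    refine ⟨P, f ∘ₗ g, hP, hFF, ?_, ?_⟩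
    · intro Q hQ
      intro h
      constructor
      · intro hh
        have hhf : h ∘ₗ f = 0 := by
          ext m
          obtain ⟨p, rfl⟩ := hg m
          have := LinearMap.congr_fun hh p
          simpa using this
        obtain ⟨u, hu⟩ := sg4_descend f g hg hfg h hhf
        obtain ⟨v, hv⟩ := (sg4_key f g hP hf hg hfg Q).mp (hext Q hQ) u
        refine ⟨v, ?_⟩
        show v ∘ₗ (f ∘ₗ g) = h
        ext x
        exact ((LinearMap.congr_fun hv (g x)).trans (LinearMap.congr_fun hu x) :)
      · rintro ⟨v, rfl⟩
        show (v ∘ₗ (f ∘ₗ g)) ∘ₗ (f ∘ₗ g) = 0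
        ext x
        simp [hfg.apply_apply_eq_zero]
    · exact ⟨(LinearEquiv.ofInjective f hf).trans (LinearEquiv.ofEq _ _ hrange.symm)⟩
end
end

section
/- Every finitely generated Gorenstein projective module over a commutative ring R admits a right co-proper resolution by finitely generated free R-modules; i.e., there is an exact sequence 0 → M → L^0 → L^1 → ⋯ with each L^i finitely generated free, which remains exact after applying Hom_R(−, Q) for every projective module Q. -/
open CategoryTheory

noncomputable section

namespace Stmt7Aux

open LinearMap Submodule

variable {R : Type} [CommRing R]

/-- A co-proper right projective resolution. -/
def CoProper (N : ModuleCat.{0} R) : Prop :=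
  ∃ (X : ℕ → ModuleCat.{0} R) (e : N →ₗ[R] X 0) (d : ∀ i, X i →ₗ[R] X (i + 1)),
    (∀ i, Module.Projective R (X i)) ∧
    Function.Injective e ∧ Function.Exact e (d 0) ∧
    (∀ i, Function.Exact (d i) (d (i + 1))) ∧
    (∀ Q : ModuleCat.{0} R, Module.Projective R Q →
      Function.Surjective (fun h : X 0 →ₗ[R] Q => h.comp e) ∧
      Function.Exact (fun h : X (0 + 1) →ₗ[R] Q => h.comp (d 0))
        (fun h : X 0 →ₗ[R] Q => h.comp e) ∧
      (∀ i, Function.Exact (fun h : X (i + 1 + 1) →ₗ[R] Q => h.comp (d (i + 1)))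
        (fun h : X (i + 1) →ₗ[R] Q => h.comp (d i))))

theorem coProper_congr {N N' : ModuleCat.{0} R} (σ : N ≃ₗ[R] N') (h : CoProper N) :
    CoProper N' := by
  obtain ⟨X, e, d, hproj, hinj, hex0, hexs, hHom⟩ := h
  refine ⟨X, e ∘ₗ (σ.symm : N' →ₗ[R] N), d, hproj, hinj.comp σ.symm.injective, ?_, hexs, ?_⟩
  · intro y
    rw [hex0 y]
    constructor
    · rintro ⟨n, rfl⟩; exact ⟨σ n, by simp⟩
    · rintro ⟨n', rfl⟩; exact ⟨σ.symm n', rfl⟩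
  · intro Q hQ
    obtain ⟨hs, hx0, hxs⟩ := hHom Q hQ
    refine ⟨?_, ?_, hxs⟩
    · intro g
      obtain ⟨h, hh⟩ := hs (g ∘ₗ (σ : N →ₗ[R] N'))
      refine ⟨h, ?_⟩
      ext n'
      have := LinearMap.congr_fun hh (σ.symm n')
      simpa using this
    · intro h
      constructor
      · intro h0
        apply (hx0 h).mp
        ext n
        have := LinearMap.congr_fun h0 (σ n)
        simpa using this
      · rintro ⟨k, rfl⟩
        ext n'
        simp [hex0.apply_apply_eq_zero]

/-- degree-0 modification adding a projective summand -/
def prodX (X : ℕ → ModuleCat.{0} R) (P : ModuleCat.{0} R) : ℕ → ModuleCat.{0} R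
  | 0 => ModuleCat.of R (X 0 × P)
  | (n+1) => X (n+1)

def prodD (X : ℕ → ModuleCat.{0} R) (P : ModuleCat.{0} R) (d : ∀ i, X i →ₗ[R] X (i + 1)) :
    ∀ i, prodX X P i →ₗ[R] prodX X P (i + 1)
  | 0 => (d 0) ∘ₗ (LinearMap.fst R (X 0) P)
  | (n+1) => d (n+1)

theorem coProper_prod {N : ModuleCat.{0} R} (P : ModuleCat.{0} R) (hP : Module.Projective R P)
    (h : CoProper N) : CoProper (ModuleCat.of R (N × P)) := by
  obtain ⟨X, e, d, hproj, hinj, hex0, hexs, hHom⟩ := h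
  refine ⟨prodX X P, (e.prodMap (LinearMap.id : P →ₗ[R] P) : ↥N × ↥P →ₗ[R] ↥(X 0) × ↥P),
    prodD X P d, ?_, ?_, ?_, ?_, ?_⟩
  · intro i
    cases i with
    | zero => exact inferInstanceAs (Module.Projective R (↥(X 0) × ↥P))
    | succ n => exact hproj (n+1)
  · rintro ⟨n, p⟩ ⟨n', p'⟩ hh
    have h1 : e n = e n' := congrArg Prod.fst hh
    have h2 : p = p' := congrArg Prod.snd hh
    exact Prod.ext (hinj h1) h2
  · rintro ⟨x, p⟩
    show d 0 x = 0 ↔ _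
    rw [hex0 x]
    constructor
    · rintro ⟨n, rfl⟩; exact ⟨(n, p), rfl⟩
    · rintro ⟨⟨n, q⟩, hh⟩
      exact ⟨n, congrArg Prod.fst hh⟩
  · intro i
    cases i with
    | zero =>
      intro y
      show d 1 y = 0 ↔ _
      rw [(hexs 0) y]
      constructor
      · rintro ⟨x, rfl⟩; exact ⟨(x, 0), rfl⟩
      · rintro ⟨⟨x, p⟩, rfl⟩; exact ⟨x, rfl⟩
    | succ n => exact hexs (n+1)
  · intro Q hQ
    obtain ⟨hs, hx0, hxs⟩ := hHom Q hQ
    refine ⟨?_, ?_, ?_⟩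
    · intro g
      obtain ⟨h, hh⟩ := hs (g ∘ₗ (LinearMap.inl R N P))
      refine ⟨LinearMap.coprod h (g ∘ₗ (LinearMap.inr R N P)), ?_⟩
      apply LinearMap.ext
      rintro ⟨n, p⟩
      have h1 : h (e n) = g (n, 0) := LinearMap.congr_fun hh n
      show h (e n) + g (0, p) = g (n, p)
      have h4 : ((n : N), (0 : P)) + ((0 : N), (p : P)) = (n, p) := by
        rw [Prod.mk_add_mk, add_zero, zero_add]
      rw [h1, ← map_add, h4]
    · intro h
      constructor
      · intro h0
        have hz : ∀ p : P, h ((0 : X 0), p) = 0 := by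
          intro p
          have h2 : h (e 0, p) = 0 := LinearMap.congr_fun h0 (0, p)
          rwa [map_zero] at h2
        have h1 : (h ∘ₗ (LinearMap.inl R (X 0) P)) ∘ₗ e = 0 := by
          ext n
          show h (e n, 0) = 0
          exact LinearMap.congr_fun h0 (n, 0)
        obtain ⟨k, hk⟩ := (hx0 (h ∘ₗ (LinearMap.inl R (X 0) P))).mp h1
        refine ⟨k, ?_⟩
        ext ⟨x, p⟩
        have h2 : k (d 0 x) = h (x, 0) := LinearMap.congr_fun hk x
        show k (d 0 x) = h (x, p)
        rw [h2]
        have h3 : ((x : X 0), (p : P)) = ((x : X 0), (0 : P)) + ((0 : X 0), p) := by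
          rw [Prod.mk_add_mk, add_zero, zero_add]
        rw [h3]
        erw [map_add, hz, add_zero]
      · rintro ⟨k, rfl⟩
        apply LinearMap.ext
        rintro ⟨n, p⟩
        show k (d 0 (e n)) = 0
        rw [hex0.apply_apply_eq_zero n]
        exact map_zero k
    · intro i
      cases i with
      | zero =>
        intro h
        show h.comp (prodD X P d 0) = 0 ↔ _
        constructor
        · intro h0
          have h1 : h ∘ₗ (d 0) = 0 := by
            ext x
            have := LinearMap.congr_fun h0 (x, 0)
            exact this
          obtain ⟨k, hk⟩ := (hxs 0 h).mp h1
          exact ⟨k, hk⟩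
        · rintro ⟨k, rfl⟩
          ext ⟨x, p⟩
          show k (d 1 (d 0 x)) = 0
          rw [(hexs 0).apply_apply_eq_zero x]
          exact map_zero k
      | succ n => exact hxs (n+1)

theorem coProper_shift {N : ModuleCat.{0} R} (X : ℕ → ModuleCat.{0} R) (e : N →ₗ[R] X 0)
    (d : ∀ i, X i →ₗ[R] X (i + 1))
    (hproj : ∀ i, Module.Projective R (X i))
    (hex0 : Function.Exact e (d 0)) (hexs : ∀ i, Function.Exact (d i) (d (i + 1)))
    (hHom : ∀ Q : ModuleCat.{0} R, Module.Projective R Q →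
      Function.Surjective (fun h : X 0 →ₗ[R] Q => h.comp e) ∧
      Function.Exact (fun h : X (0 + 1) →ₗ[R] Q => h.comp (d 0))
        (fun h : X 0 →ₗ[R] Q => h.comp e) ∧
      (∀ i, Function.Exact (fun h : X (i + 1 + 1) →ₗ[R] Q => h.comp (d (i + 1)))
        (fun h : X (i + 1) →ₗ[R] Q => h.comp (d i)))) :
    CoProper (ModuleCat.of R ((X 0) ⧸ LinearMap.range e)) := by
  have hle : LinearMap.range e ≤ LinearMap.ker (d 0) := by
    rw [LinearMap.exact_iff.mp hex0]
  have hmk : ∀ m : N, (LinearMap.range e).mkQ (e m) = 0 := by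
    intro m
    rw [← LinearMap.mem_ker, Submodule.ker_mkQ]
    exact ⟨m, rfl⟩
  refine ⟨fun i => X (i + 1), Submodule.liftQ _ (d 0) hle, fun i => d (i + 1),
    fun i => hproj (i + 1), ?_, ?_, fun i => hexs (i + 1), ?_⟩
  · rw [← LinearMap.ker_eq_bot]
    apply Submodule.ker_liftQ_eq_bot
    rw [LinearMap.exact_iff.mp hex0]
  · intro y
    rw [(hexs 0) y]
    constructor
    · rintro ⟨x, rfl⟩
      exact ⟨(LinearMap.range e).mkQ x, rfl⟩
    · rintro ⟨c, rfl⟩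
      obtain ⟨x, rfl⟩ := Submodule.mkQ_surjective _ c
      exact ⟨x, rfl⟩
  · intro Q hQ
    obtain ⟨hs, hx0, hxs⟩ := hHom Q hQ
    refine ⟨?_, ?_, fun i => hxs (i + 1)⟩
    · intro g
      have h1 : (g ∘ₗ (LinearMap.range e).mkQ) ∘ₗ e = 0 := by
        ext m
        show g ((LinearMap.range e).mkQ (e m)) = 0
        rw [hmk m, map_zero]
      obtain ⟨h, hh⟩ := (hx0 (g ∘ₗ (LinearMap.range e).mkQ)).mp h1
      refine ⟨h, ?_⟩
      apply Submodule.linearMap_qext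
      ext x
      have := LinearMap.congr_fun hh x
      simpa using this
    · intro h
      constructor
      · intro h0
        have h1 : h ∘ₗ (d 0) = 0 := by
          ext x
          have := LinearMap.congr_fun h0 ((LinearMap.range e).mkQ x)
          simpa using this
        exact (hxs 0 h).mp h1
      · rintro ⟨k, rfl⟩
        apply LinearMap.ext
        intro c
        obtain ⟨x, rfl⟩ := Submodule.mkQ_surjective _ c
        show k (d 1 ((Submodule.liftQ _ (d 0) hle) (Submodule.Quotient.mk x))) = 0
        rw [Submodule.liftQ_apply, (hexs 0).apply_apply_eq_zero x, map_zero]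

theorem schanuel_equiv {M L X : Type} [AddCommGroup M] [Module R M] [AddCommGroup L]
    [Module R L] [AddCommGroup X] [Module R X]
    (jt : M →ₗ[R] L) (e₀ : M →ₗ[R] X) (st : L →ₗ[R] X) (t : X →ₗ[R] L)
    (hst : st ∘ₗ jt = e₀) (ht : t ∘ₗ e₀ = jt) :
    Nonempty (((L ⧸ LinearMap.range jt) × X) ≃ₗ[R] (L × (X ⧸ LinearMap.range e₀))) := by
  have hWker : ∀ m : M, (LinearMap.range jt).mkQ (jt m) = 0 := by
    intro m
    rw [← LinearMap.mem_ker, Submodule.ker_mkQ]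
    exact ⟨m, rfl⟩
  have hVker : ∀ m : M, (LinearMap.range e₀).mkQ (e₀ m) = 0 := by
    intro m
    rw [← LinearMap.mem_ker, Submodule.ker_mkQ]
    exact ⟨m, rfl⟩
  have hstc : ∀ m, st (jt m) = e₀ m := fun m => by
    have := LinearMap.congr_fun hst m; simpa using this
  have htc : ∀ m, t (e₀ m) = jt m := fun m => by
    have := LinearMap.congr_fun ht m; simpa using this
  refine ⟨LinearEquiv.ofLinear
    (LinearMap.coprod
      (Submodule.liftQ _ (LinearMap.prod (LinearMap.id - t ∘ₗ st)
        (-((LinearMap.range e₀).mkQ ∘ₗ st))) ?_)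
      (LinearMap.prod t ((LinearMap.range e₀).mkQ)))
    (LinearMap.coprod
      (LinearMap.prod ((LinearMap.range jt).mkQ) st)
      (Submodule.liftQ _ (LinearMap.prod (-((LinearMap.range jt).mkQ ∘ₗ t))
        (LinearMap.id - st ∘ₗ t)) ?_))
    ?_ ?_⟩
  · rintro _ ⟨m, rfl⟩
    simp only [LinearMap.mem_ker, LinearMap.prod_apply, Function.prod, LinearMap.sub_apply,
      LinearMap.neg_apply, LinearMap.comp_apply, LinearMap.id_apply]
    rw [hstc, htc, hVker]
    simp [Prod.ext_iff]
  · rintro _ ⟨m, rfl⟩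
    simp only [LinearMap.mem_ker, LinearMap.prod_apply, Function.prod, LinearMap.sub_apply,
      LinearMap.neg_apply, LinearMap.comp_apply, LinearMap.id_apply]
    rw [htc, hWker, hstc]
    simp [Prod.ext_iff]
  · apply LinearMap.ext
    rintro ⟨l, c0⟩
    obtain ⟨y, rfl⟩ := Submodule.mkQ_surjective _ c0
    simp only [LinearMap.comp_apply, LinearMap.coprod_apply, LinearMap.prod_apply, Function.prod,
      Submodule.mkQ_apply, Submodule.liftQ_apply, LinearMap.sub_apply, LinearMap.neg_apply,
      LinearMap.id_apply, LinearMap.id_coe, id_eq, map_add, map_sub, map_neg,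
      Prod.mk_add_mk, Prod.neg_mk,
      Submodule.Quotient.mk_add, Submodule.Quotient.mk_sub, Submodule.Quotient.mk_neg,
      Prod.mk_sub_mk, Prod.mk.injEq]
    constructor
    · abel
    · abel
  · apply LinearMap.ext
    rintro ⟨c, x⟩
    obtain ⟨l, rfl⟩ := Submodule.mkQ_surjective _ c
    simp only [LinearMap.comp_apply, LinearMap.coprod_apply, LinearMap.prod_apply, Function.prod,
      Submodule.mkQ_apply, Submodule.liftQ_apply, LinearMap.sub_apply, LinearMap.neg_apply,
      LinearMap.id_apply, LinearMap.id_coe, id_eq, map_add, map_sub, map_neg,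
      Prod.mk_add_mk, Prod.neg_mk,
      Submodule.Quotient.mk_add, Submodule.Quotient.mk_sub, Submodule.Quotient.mk_neg,
      Prod.mk_sub_mk, Prod.mk.injEq]
    constructor
    · abel
    · abel

theorem envelope (N : ModuleCat.{0} R) (X : ModuleCat.{0} R) [Module.Finite R N]
    (hX : Module.Projective R X) (e : N →ₗ[R] X) :
    ∃ (L : ModuleCat.{0} R) (j : N →ₗ[R] L) (s : L →ₗ[R] X),
      Module.Free R L ∧ Module.Finite R L ∧ s ∘ₗ j = e := by
  classical
  obtain ⟨sec, hsec⟩ := Module.projective_def'.mp hX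
  obtain ⟨T, hT⟩ := Module.Finite.fg_top (R := R) (M := N)
  set S : Finset X := T.biUnion (fun n => (sec (e n)).support) with hS
  let incl : ({x // x ∈ S} →₀ R) →ₗ[R] (X →₀ R) := Finsupp.lmapDomain R R Subtype.val
  let proj : (X →₀ R) →ₗ[R] ({x // x ∈ S} →₀ R) :=
    Finsupp.lcomapDomain Subtype.val Subtype.val_injective
  have key : ∀ f : X →₀ R, (f.support : Set X) ⊆ (S : Set X) → incl (proj f) = f := by
    intro f hf
    ext x
    by_cases hx : x ∈ S
    · have : x = Subtype.val (⟨x, hx⟩ : {x // x ∈ S}) := rfl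
      rw [this]
      show Finsupp.mapDomain Subtype.val (Finsupp.comapDomain Subtype.val f _) _ = _
      rw [Finsupp.mapDomain_apply Subtype.val_injective, Finsupp.comapDomain_apply]
    · have h1 : f x = 0 := by
        by_contra hc
        exact hx (by simpa using hf (Finsupp.mem_support_iff.mpr hc))
      rw [h1]
      show Finsupp.mapDomain Subtype.val (Finsupp.comapDomain Subtype.val f _) _ = _
      rw [Finsupp.mapDomain_notin_range]
      rintro ⟨⟨a, ha⟩, rfl⟩
      exact hx ha
  refine ⟨ModuleCat.of R ({x // x ∈ S} →₀ R),
    proj ∘ₗ sec ∘ₗ e, (Finsupp.linearCombination R _root_.id) ∘ₗ incl,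
    inferInstanceAs (Module.Free R ({x // x ∈ S} →₀ R)), ?_, ?_⟩
  · exact Module.Finite.equiv (Finsupp.linearEquivFunOnFinite R R {x // x ∈ S}).symm
  · apply LinearMap.ext_on hT
    intro n hn
    have hsupp : ((sec (e n)).support : Set X) ⊆ (S : Set X) := by
      intro x hx
      simp only [Finset.coe_biUnion, Set.mem_iUnion, hS, Finset.coe_sort_coe]
      exact ⟨n, hn, by simpa using hx⟩
    show (Finsupp.linearCombination R _root_.id) (incl (proj (sec (e n)))) = e n
    rw [key _ hsupp]
    exact LinearMap.congr_fun hsec (e n)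

structure StepData (R : Type) [CommRing R] (N : ModuleCat.{0} R) where
  L : ModuleCat.{0} R
  C : ModuleCat.{0} R
  j : N →ₗ[R] L
  pi : L →ₗ[R] C
  free : Module.Free R L
  fin : Module.Finite R L
  cfin : Module.Finite R C
  inj : Function.Injective j
  surj : Function.Surjective pi
  ex : Function.Exact j pi
  homSurj : ∀ Q : ModuleCat.{0} R, Module.Projective R Q →
      Function.Surjective (fun h : L →ₗ[R] Q => h.comp j)
  factor : ∀ (Q : ModuleCat.{0} R) (h : L →ₗ[R] Q), h ∘ₗ j = 0 →
      ∃ h' : C →ₗ[R] Q, h' ∘ₗ pi = h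
  inv : ∃ P' : ModuleCat.{0} R, Module.Projective R P' ∧
      CoProper (ModuleCat.of R (C × P'))

theorem step (N : ModuleCat.{0} R) (hfg : Module.Finite R N)
    (hinv : ∃ P : ModuleCat.{0} R, Module.Projective R P ∧
      CoProper (ModuleCat.of R (N × P))) :
    Nonempty (StepData R N) := by
  haveI := hfg
  obtain ⟨P, hP, X, e₀, d, hproj, hinj, hex0, hexs, hHom⟩ := hinv
  haveI := hP
  -- the embedding of N into X 0
  set e : N →ₗ[R] X 0 := e₀ ∘ₗ (LinearMap.inl R N P) with he
  have heinj : Function.Injective e := by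
    apply hinj.comp
    intro a b hab
    exact congrArg Prod.fst hab
  obtain ⟨L, j, s, hLfree, hLfin, hsj⟩ := envelope N (X 0) (hproj 0) e
  haveI := hLfree
  haveI := hLfin
  haveI : Module.Projective R L := Module.Projective.of_free
  set jt : (↥N × ↥P) →ₗ[R] (↥L × ↥P) := j.prodMap LinearMap.id with hjt
  set st : (↥L × ↥P) →ₗ[R] X 0 := LinearMap.coprod s (e₀ ∘ₗ LinearMap.inr R N P) with hstdef
  have hst : st ∘ₗ jt = e₀ := by
    apply LinearMap.ext
    rintro ⟨n, p⟩
    show s (j n) + e₀ (0, p) = e₀ (n, p)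
    have h1 : s (j n) = e n := LinearMap.congr_fun hsj n
    rw [h1, he]
    show e₀ (n, 0) + e₀ (0, p) = e₀ (n, p)
    have h4 : ((n : N), (0 : P)) + ((0 : N), (p : P)) = (n, p) := by
      rw [Prod.mk_add_mk, add_zero, zero_add]
    rw [← map_add, h4]
  obtain ⟨t, ht⟩ := (hHom (ModuleCat.of R (↥L × ↥P))
    (inferInstanceAs (Module.Projective R (↥L × ↥P)))).1 jt
  set W : Submodule R (↥L × ↥P) := LinearMap.range jt with hW
  set C : ModuleCat.{0} R := ModuleCat.of R ((↥L × ↥P) ⧸ W) with hC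
  set π : ↥L →ₗ[R] C := W.mkQ ∘ₗ (LinearMap.inl R L P) with hπ
  have hmkW : ∀ m : ↥N × ↥P, W.mkQ (jt m) = 0 := by
    intro m
    rw [← LinearMap.mem_ker, Submodule.ker_mkQ]
    exact ⟨m, rfl⟩
  have hjinj : Function.Injective j := by
    intro a b hab
    apply heinj
    rw [← hsj]
    show s (j a) = s (j b)
    rw [hab]
  have hπsurj : Function.Surjective π := by
    intro c
    obtain ⟨⟨x, p⟩, rfl⟩ := Submodule.mkQ_surjective _ c
    refine ⟨x, ?_⟩
    show W.mkQ (x, 0) = W.mkQ (x, p)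
    rw [← sub_eq_zero, ← map_sub, ← LinearMap.mem_ker, Submodule.ker_mkQ]
    exact ⟨(0, -p), by simp [hjt, Prod.ext_iff]⟩
  have hexjπ : Function.Exact j π := by
    intro y
    constructor
    · intro hy
      have hy' : ((y : L), (0 : P)) ∈ W := by
        rwa [← Submodule.Quotient.mk_eq_zero, ← Submodule.mkQ_apply]
      obtain ⟨⟨n, p⟩, hnp⟩ := hy'
      refine ⟨n, ?_⟩
      exact congrArg Prod.fst hnp
    · rintro ⟨n, rfl⟩
      show W.mkQ (j n, 0) = 0
      have : ((j n : L), (0 : P)) = jt (n, 0) := by simp [hjt]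
      rw [this, hmkW]
  refine ⟨⟨L, C, j, π, hLfree, hLfin, Module.Finite.of_surjective π hπsurj, hjinj,
    hπsurj, hexjπ, ?_, ?_, ?_⟩⟩
  · -- homSurj
    intro Q hQ g
    obtain ⟨h, hh⟩ := (hHom Q hQ).1 (g ∘ₗ (LinearMap.fst R N P))
    refine ⟨h ∘ₗ s, ?_⟩
    ext n
    have h1 : s (j n) = e n := LinearMap.congr_fun hsj n
    have h2 : h (e₀ (n, (0 : P))) = g n := LinearMap.congr_fun hh (n, (0 : P))
    show h (s (j n)) = g n
    rw [h1]
    exact h2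
  · -- factor
    intro Q h h0
    have hker : W ≤ LinearMap.ker (LinearMap.coprod h 0) := by
      rintro _ ⟨⟨n, p⟩, rfl⟩
      show h (j n) + (0 : ↥P →ₗ[R] ↥Q) p = 0
      have h5 : h (j n) = 0 := LinearMap.congr_fun h0 n
      rw [h5]
      simp
    refine ⟨Submodule.liftQ W (LinearMap.coprod h 0) hker, ?_⟩
    ext y
    show Submodule.liftQ W (LinearMap.coprod h 0) hker (W.mkQ ((y : L), (0 : P))) = h y
    rw [Submodule.mkQ_apply, Submodule.liftQ_apply]
    simp
  · -- inv
    have hC0 : CoProper (ModuleCat.of R ((X 0) ⧸ LinearMap.range e₀)) :=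
      coProper_shift X e₀ d hproj hex0 hexs hHom
    have hC0L : CoProper (ModuleCat.of R (((X 0) ⧸ LinearMap.range e₀) × (↥L × ↥P))) :=
      coProper_prod (ModuleCat.of R (↥L × ↥P))
        (inferInstanceAs (Module.Projective R (↥L × ↥P))) hC0
    obtain ⟨E⟩ := schanuel_equiv jt e₀ st t hst ht
    refine ⟨X 0, hproj 0, ?_⟩
    have σ : ((↥(X 0) ⧸ LinearMap.range e₀) × (↥L × ↥P)) ≃ₗ[R]
        (((↥L × ↥P) ⧸ LinearMap.range jt) × ↥(X 0)) :=
      (LinearEquiv.prodComm R (↥(X 0) ⧸ LinearMap.range e₀) (↥L × ↥P)).trans E.symm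
    exact coProper_congr σ hC0L

theorem coProper_of_isGProj {M : ModuleCat.{0} R} (h : GW.IsGProj R M) : CoProper M := by
  obtain ⟨P, d, hproj, hex, hHom, ⟨σ⟩⟩ := h
  have hdd : ∀ i : ℤ, ∀ x : P i, (d (i + 1)) ((d i) x) = 0 := fun i x =>
    (hex i).apply_apply_eq_zero x
  -- the embedding of M into P 0
  let e : M →ₗ[R] P ((0 : ℕ) : ℤ) := by
    exact (LinearMap.ker (d 0)).subtype ∘ₗ (σ : M →ₗ[R] LinearMap.ker (d 0))
  have hememker : ∀ m : M, e m ∈ LinearMap.ker (d 0) := fun m => (σ m).2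
  have hesymm : ∀ (y : P 0) (hy : y ∈ LinearMap.ker (d 0)), e (σ.symm ⟨y, hy⟩) = y := by
    intro y hy
    show ((σ (σ.symm ⟨y, hy⟩) : LinearMap.ker (d 0)) : P 0) = y
    rw [σ.apply_symm_apply]
  refine ⟨fun n => P n, e, fun n => by exact d (n : ℤ), fun n => hproj _, ?_, ?_,
    fun n => by exact hex (n : ℤ), ?_⟩
  · -- injectivity of e
    intro a b hab
    apply σ.injective
    exact Subtype.ext hab
  · -- Exact e (d 0)
    intro y
    constructor
    · intro hy
      exact ⟨σ.symm ⟨y, hy⟩, hesymm y hy⟩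
    · rintro ⟨m, rfl⟩
      exact hememker m
  · -- Hom conditions
    intro Q hQ
    have H := hHom Q hQ
    have hmem : ∀ x : P (-1), (by exact d (-1) : P (-1) →ₗ[R] P ((0:ℕ):ℤ)) x ∈
        LinearMap.ker (d 0) := by
      intro x
      exact LinearMap.mem_ker.mpr (hdd (-1) x)
    set ρ : P (-1) →ₗ[R] LinearMap.ker (d 0) :=
      LinearMap.codRestrict _ _ hmem with hρ
    have hρcoe : ∀ x : P (-1), ((ρ x : LinearMap.ker (d 0)) : P ((0:ℕ):ℤ)) =
        (by exact d (-1) : P (-1) →ₗ[R] P ((0:ℕ):ℤ)) x := fun x => rfl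
    have extend : ∀ g : M →ₗ[R] Q, ∃ hmap : P ((0:ℕ):ℤ) →ₗ[R] Q, hmap ∘ₗ e = g := by
      intro g
      set ψ : ↑(P ((-2:ℤ)+1)) →ₗ[R] ↑Q :=
        (show ↑(P ((-2:ℤ)+1)) →ₗ[R] ↑Q from
          g ∘ₗ (σ.symm : LinearMap.ker (d 0) →ₗ[R] M) ∘ₗ ρ) with hψdef
      have hψ : (fun k : P ((-2:ℤ)+1) →ₗ[R] Q => k ∘ₗ d (-2)) ψ = 0 := by
        apply LinearMap.ext
        intro x
        show g (σ.symm (ρ ((d (-2)) x))) = 0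
        have h1 : ρ ((d (-2)) x) = 0 := by
          apply Subtype.ext
          show ((ρ ((d (-2)) x) : LinearMap.ker (d 0)) : P ((0:ℕ):ℤ)) = 0
          rw [hρcoe]
          exact hdd (-2) x
        rw [h1]
        simp
      obtain ⟨k, hk⟩ := (H (-2) ψ).mp hψ
      refine ⟨by exact k, ?_⟩
      apply LinearMap.ext
      intro m
      have hmemrange : (e m : P ((0:ℕ):ℤ)) ∈ Set.range (d (-1)) := by
        apply (hex (-1) (e m)).mp
        exact LinearMap.mem_ker.mp (hememker m)
      obtain ⟨x, hx⟩ := hmemrange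
      show k (e m) = g m
      rw [← hx]
      have h2 : k ((d (-1)) x) = ψ x := by exact LinearMap.congr_fun hk x
      rw [h2]
      show g (σ.symm (ρ x)) = g m
      have h3 : ρ x = σ m := by
        apply Subtype.ext
        show ((ρ x : LinearMap.ker (d 0)) : P ((0:ℕ):ℤ)) = _
        rw [hρcoe]
        exact hx
      rw [h3, σ.symm_apply_apply]
    refine ⟨?_, ?_, ?_⟩
    · intro g
      obtain ⟨hmap, hh⟩ := extend g
      exact ⟨hmap, hh⟩
    · intro h
      constructor
      · intro h0
        have h1 : (fun k : P ((-1:ℤ)+1) →ₗ[R] Q => k ∘ₗ d (-1)) h = 0 := by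
          apply LinearMap.ext
          intro x
          show h ((by exact d (-1) : P (-1) →ₗ[R] P ((0:ℕ):ℤ)) x) = 0
          have h4 : (by exact d (-1) : P (-1) →ₗ[R] P ((0:ℕ):ℤ)) x =
              e (σ.symm (ρ x)) := by
            rw [← hρcoe x]
            exact (hesymm _ (ρ x).2).symm
          rw [h4]
          exact LinearMap.congr_fun h0 (σ.symm (ρ x))
        obtain ⟨k, hk⟩ := (H (-1) (show ↑(P ((-1:ℤ)+1)) →ₗ[R] ↑Q from h)).mp (by exact h1)
        exact ⟨by exact k, by exact hk⟩
      · rintro ⟨k, rfl⟩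
        apply LinearMap.ext
        intro m
        show k ((d 0) (e m)) = 0
        have h5 : (d 0) (e m) = 0 := hememker m
        rw [h5]
        exact map_zero k
    · intro i
      exact H i


noncomputable def chain (M : ModuleCat.{0} R) (h0 : Module.Finite R M)
    (hinv0 : ∃ P : ModuleCat.{0} R, Module.Projective R P ∧
      CoProper (ModuleCat.of R (M × P))) :
    ℕ → Σ N : ModuleCat.{0} R, StepData R N :=
  Nat.rec ⟨M, (step M h0 hinv0).some⟩
    (fun _ prev => ⟨prev.2.C, (step prev.2.C prev.2.cfin prev.2.inv).some⟩)


end Stmt7Aux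

/-- every finitely generated Gorenstein projective module admits a right
co-proper resolution by finitely generated free modules. -/
theorem stmt7 (R : Type) [CommRing R] (M : ModuleCat.{0} R) (hfg : Module.Finite R M)
    (hM : GW.IsGProj R M) :
    ∃ (L : ℕ → ModuleCat.{0} R) (e : M →ₗ[R] L 0) (d : ∀ i, L i →ₗ[R] L (i + 1)),
      (∀ i, Module.Free R (L i) ∧ Module.Finite R (L i)) ∧
      Function.Injective e ∧ Function.Exact e (d 0) ∧
      (∀ i, Function.Exact (d i) (d (i + 1))) ∧
      (∀ Q : ModuleCat.{0} R, Module.Projective R Q →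
        Function.Surjective (fun h : L 0 →ₗ[R] Q => h.comp e) ∧
        Function.Exact (fun h : L (0 + 1) →ₗ[R] Q => h.comp (d 0))
          (fun h : L 0 →ₗ[R] Q => h.comp e) ∧
        (∀ i, Function.Exact (fun h : L (i + 1 + 1) →ₗ[R] Q => h.comp (d (i + 1)))
          (fun h : L (i + 1) →ₗ[R] Q => h.comp (d i)))) := by
  classical
  have hCo : Stmt7Aux.CoProper M := Stmt7Aux.coProper_of_isGProj hM
  have hPUnit : Module.Projective R (ModuleCat.of R PUnit) := by
    infer_instance
  have hinv0 : ∃ P : ModuleCat.{0} R, Module.Projective R P ∧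
      Stmt7Aux.CoProper (ModuleCat.of R (↥M × ↥P)) :=
    ⟨ModuleCat.of R PUnit, hPUnit, Stmt7Aux.coProper_prod _ hPUnit hCo⟩
  set ch := Stmt7Aux.chain M hfg hinv0 with hch
  refine ⟨fun n => (ch n).2.L, by exact (ch 0).2.j,
    fun n => by exact (ch (n+1)).2.j ∘ₗ (ch n).2.pi, ?_, ?_, ?_, ?_, ?_⟩
  · exact fun i => ⟨(ch i).2.free, (ch i).2.fin⟩
  · exact (ch 0).2.inj
  · -- Exact e (d 0)
    intro y
    constructor
    · intro hy
      have h1 : (ch 1).2.j ((ch 0).2.pi y) = 0 := by exact hy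
      have h2 : (ch 0).2.pi y = 0 := by
        apply (ch 1).2.inj
        rw [h1]
        exact (map_zero _).symm
      exact ((ch 0).2.ex y).mp h2
    · rintro ⟨x, rfl⟩
      show (ch 1).2.j ((ch 0).2.pi ((ch 0).2.j x)) = 0
      have h3 : (ch 0).2.pi ((ch 0).2.j x) = 0 := (ch 0).2.ex.apply_apply_eq_zero x
      rw [h3]
      exact map_zero _
  · -- Exact (d i) (d (i+1))
    intro i y
    constructor
    · intro hy
      have h1 : (ch (i+2)).2.j ((ch (i+1)).2.pi y) = 0 := by exact hy
      have h2 : (ch (i+1)).2.pi y = 0 := by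
        apply (ch (i+2)).2.inj
        rw [h1]
        exact (map_zero _).symm
      obtain ⟨c, hc⟩ := ((ch (i+1)).2.ex y).mp h2
      obtain ⟨x, hx⟩ := (ch i).2.surj c
      refine ⟨x, ?_⟩
      show (ch (i+1)).2.j ((ch i).2.pi x) = y
      rw [hx, hc]
    · rintro ⟨x, rfl⟩
      show (ch (i+2)).2.j ((ch (i+1)).2.pi ((ch (i+1)).2.j ((ch i).2.pi x))) = 0
      have h3 : (ch (i+1)).2.pi ((ch (i+1)).2.j ((ch i).2.pi x)) = 0 :=
        (ch (i+1)).2.ex.apply_apply_eq_zero ((ch i).2.pi x)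
      rw [h3]
      exact map_zero _
  · -- Hom conditions
    intro Q hQ
    refine ⟨?_, ?_, ?_⟩
    · intro g
      exact (ch 0).2.homSurj Q hQ g
    · intro h
      constructor
      · intro h0
        obtain ⟨h', hh'⟩ := (ch 0).2.factor Q h (by exact h0)
        obtain ⟨k, hk⟩ := (ch 1).2.homSurj Q hQ h'
        have hk' : k ∘ₗ (ch 1).2.j = h' := hk
        refine ⟨k, ?_⟩
        show k ∘ₗ ((ch 1).2.j ∘ₗ (ch 0).2.pi) = h
        subst hk' hh'
        rfl
      · rintro ⟨k, rfl⟩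
        apply LinearMap.ext
        intro x
        show k ((ch 1).2.j ((ch 0).2.pi ((ch 0).2.j x))) = 0
        have h3 : (ch 0).2.pi ((ch 0).2.j x) = 0 := (ch 0).2.ex.apply_apply_eq_zero x
        rw [h3]
        exact (congrArg k (map_zero _)).trans (map_zero k)
    · intro i h
      constructor
      · intro h0
        have h0' : h ∘ₗ ((ch (i+1)).2.j ∘ₗ (ch i).2.pi) = 0 := by exact h0
        have h1 : h ∘ₗ (ch (i+1)).2.j = 0 := by
          apply LinearMap.ext
          intro c
          obtain ⟨x, hx⟩ := (ch i).2.surj c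
          have h2 : h ((ch (i+1)).2.j ((ch i).2.pi x)) = 0 := LinearMap.congr_fun h0' x
          show h ((ch (i+1)).2.j c) = 0
          rw [← hx]
          exact h2
        obtain ⟨h', hh'⟩ := (ch (i+1)).2.factor Q h h1
        obtain ⟨k, hk⟩ := (ch (i+2)).2.homSurj Q hQ h'
        have hk' : k ∘ₗ (ch (i+2)).2.j = h' := hk
        refine ⟨k, ?_⟩
        show k ∘ₗ ((ch (i+2)).2.j ∘ₗ (ch (i+1)).2.pi) = h
        subst hk' hh'
        rfl
      · rintro ⟨k, rfl⟩
        apply LinearMap.ext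
        intro x
        show k ((ch (i+2)).2.j ((ch (i+1)).2.pi ((ch (i+1)).2.j ((ch i).2.pi x)))) = 0
        have h3 : (ch (i+1)).2.pi ((ch (i+1)).2.j ((ch i).2.pi x)) = 0 :=
          (ch (i+1)).2.ex.apply_apply_eq_zero ((ch i).2.pi x)
        rw [h3]
        exact (congrArg k (map_zero _)).trans (map_zero k)
end
end

section
/- Let (R, m) be a local quasi-Frobenius commutative ring which is not a field. Then R[[X]] is not an arithmetical ring; specifically, for any nonzero non-invertible a ∈ R, the ideal aR[[X]] + XR[[X]] of R[[X]] is not principal. -/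
open CategoryTheory

noncomputable section

namespace GWaux

lemma one_eq_comb {R : Type} [CommRing R] (hinj : Module.Injective R R) (a b : R)
    (hkey : ∀ t : R, t * a = 0 → t * b = 0 → t = 0) :
    ∃ c d : R, 1 = a * c + b * d := by
  set ψ : R →ₗ[R] R × R :=
    (LinearMap.toSpanSingleton R R a).prod (LinearMap.toSpanSingleton R R b) with hψ
  have hψinj : Function.Injective ψ := by
    intro s t hst
    have h1 : s * a = t * a := by
      simpa [hψ, LinearMap.toSpanSingleton, smul_eq_mul, Prod.ext_iff] using
        congrArg Prod.fst hst
    have h2 : s * b = t * b := by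
      simpa [hψ, LinearMap.toSpanSingleton, smul_eq_mul, Prod.ext_iff] using
        congrArg Prod.snd hst
    have := hkey (s - t) (by rw [sub_mul, h1, sub_self]) (by rw [sub_mul, h2, sub_self])
    exact sub_eq_zero.mp this
  obtain ⟨π, hπ⟩ := hinj.out ψ hψinj LinearMap.id
  have h1 : π (a, b) = 1 := by
    have := hπ 1
    simpa [hψ, LinearMap.toSpanSingleton, smul_eq_mul] using this
  have h2 : (a, b) = a • ((1 : R), (0 : R)) + b • ((0 : R), (1 : R)) := by
    simp [Prod.ext_iff]
  have h3 : (1 : R) = a * π (1, 0) + b * π (0, 1) := by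
    calc (1 : R) = π (a, b) := h1.symm
      _ = π (a • ((1 : R), (0 : R)) + b • ((0 : R), (1 : R))) := by rw [← h2]
      _ = a * π (1, 0) + b * π (0, 1) := by
          rw [map_add, map_smul, map_smul, smul_eq_mul, smul_eq_mul]
  exact ⟨π (1, 0), π (0, 1), h3⟩

/-- Main coefficient argument. -/
lemma not_principal {R : Type} [CommRing R] [IsLocalRing R] (hinj : Module.Injective R R) :
    ∀ a : R, a ≠ 0 → ¬ IsUnit a →
      ¬ (Ideal.span {PowerSeries.C a, PowerSeries.X} :
          Ideal (PowerSeries R)).IsPrincipal := by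
  intro a ha hau hpr
  obtain ⟨f, hf⟩ := hpr
  rw [Ideal.submodule_span_eq] at hf
  have hC : (PowerSeries.C a) ∈ Ideal.span ({f} : Set (PowerSeries R)) := by
    rw [← hf]; exact Ideal.subset_span (by simp)
  have hX : (PowerSeries.X : PowerSeries R) ∈ Ideal.span ({f} : Set (PowerSeries R)) := by
    rw [← hf]; exact Ideal.subset_span (by simp)
  have hfm : f ∈ Ideal.span ({PowerSeries.C a, PowerSeries.X} : Set (PowerSeries R)) := by
    rw [hf]; exact Ideal.subset_span (by simp)
  obtain ⟨g, hg⟩ := Ideal.mem_span_singleton'.mp hC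
  obtain ⟨h, hh⟩ := Ideal.mem_span_singleton'.mp hX
  obtain ⟨P, Q, hPQ⟩ := Ideal.mem_span_pair.mp hfm
  set f0 := PowerSeries.constantCoeff f with hf0
  set f1 := PowerSeries.coeff 1 f with hf1
  set g0 := PowerSeries.constantCoeff g with hg0
  set h0 := PowerSeries.constantCoeff h with hh0
  set h1 := PowerSeries.coeff 1 h with hh1
  set P0 := PowerSeries.constantCoeff P with hP0
  have e0g : g0 * f0 = a := by
    have := congrArg (PowerSeries.constantCoeff) hg
    simpa using this
  have e0h : h0 * f0 = 0 := by
    have := congrArg (PowerSeries.constantCoeff) hh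
    simpa using this
  have e0f : f0 = P0 * a := by
    have := congrArg (PowerSeries.constantCoeff) hPQ
    simpa [mul_comm] using this.symm
  have e1 : h0 * f1 + h1 * f0 = 1 := by
    have := congrArg (PowerSeries.coeff 1) hh
    rw [PowerSeries.coeff_mul, Finset.Nat.sum_antidiagonal_eq_sum_range_succ_mk] at this
    simpa [Finset.sum_range_succ, hh0, hh1, hf0, hf1,
      PowerSeries.coeff_zero_eq_constantCoeff] using this
  -- h0 is not a unit
  have hh0u : ¬ IsUnit h0 := by
    intro hu
    have : f0 = 0 := by
      rcases hu with ⟨u, hu⟩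
      have := congrArg (fun x => (↑u⁻¹ : R) * x) e0h
      simpa [← hu, ← mul_assoc] using this
    exact ha (by rw [← e0g, this, mul_zero])
  -- key annihilator fact
  have hkey : ∀ t : R, t * a = 0 → t * h0 = 0 → t = 0 := by
    intro t hta hth
    have htf0 : t * f0 = 0 := by
      rw [e0f, show t * (P0 * a) = P0 * (t * a) by ring, hta, mul_zero]
    calc t = t * (h0 * f1 + h1 * f0) := by rw [e1, mul_one]
      _ = f1 * (t * h0) + h1 * (t * f0) := by ring
      _ = 0 := by rw [hth, htf0, mul_zero, mul_zero, add_zero]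
  obtain ⟨c, d, hcd⟩ := one_eq_comb hinj a h0 hkey
  have hmem : (1 : R) ∈ IsLocalRing.maximalIdeal R := by
    rw [hcd]
    exact Ideal.add_mem _
      (Ideal.mul_mem_right _ _ ((IsLocalRing.mem_maximalIdeal _).mpr hau))
      (Ideal.mul_mem_right _ _ ((IsLocalRing.mem_maximalIdeal _).mpr hh0u))
  exact (IsLocalRing.maximalIdeal.isMaximal R).ne_top ((Ideal.eq_top_iff_one _).mpr hmem)

end GWaux

/-- if `(R, m)` is a local quasi-Frobenius ring which is not a field, then
`R[[X]]` is not arithmetical; specifically for any nonzero non-invertible `a ∈ R` the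
ideal `aR[[X]] + XR[[X]]` is not principal. -/
theorem stmt14 (R : Type) [CommRing R] [IsLocalRing R] (hQF : GW.IsQuasiFrobenius R)
    (hnf : ¬ IsField R) :
    ¬ GW.IsArithmetical (PowerSeries R) ∧
    ∀ a : R, a ≠ 0 → ¬ IsUnit a →
      ¬ (Ideal.span {PowerSeries.C a, PowerSeries.X} :
          Ideal (PowerSeries R)).IsPrincipal := by
  obtain ⟨-, hinj⟩ := hQF
  have key := GWaux.not_principal hinj
  refine ⟨?_, key⟩
  intro harith
  -- get a nonzero nonunit
  have hm : IsLocalRing.maximalIdeal R ≠ ⊥ := by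
    intro h0
    exact hnf (IsLocalRing.isField_iff_maximalIdeal_eq.mpr h0)
  rw [Submodule.ne_bot_iff] at hm
  obtain ⟨a, ham, ha0⟩ := hm
  have hau : ¬ IsUnit a := (IsLocalRing.mem_maximalIdeal _).mp ham
  set I : Ideal (PowerSeries R) := Ideal.span {PowerSeries.C a, PowerSeries.X} with hI
  have hfg : I.FG := Submodule.fg_span (Set.toFinite _)
  set p := IsLocalRing.maximalIdeal (PowerSeries R) with hp
  have hpr := harith I hfg p (IsLocalRing.maximalIdeal.isMaximal _)
  set S := Localization.AtPrime p with hS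
  have hU : p.primeCompl ≤ IsUnit.submonoid (PowerSeries R) := by
    intro x hx
    by_contra hu
    exact hx ((IsLocalRing.mem_maximalIdeal _).mpr hu)
  set e : PowerSeries R ≃ₐ[PowerSeries R] S := IsLocalization.atUnits (PowerSeries R) p.primeCompl hU with he
  have hcoe : algebraMap (PowerSeries R) S = (e.toRingEquiv : PowerSeries R →+* S) := by
    ext x
    exact (e.commutes x).symm
  rw [hcoe] at hpr
  obtain ⟨y, hy⟩ := hpr
  rw [Ideal.submodule_span_eq] at hy
  have : I = Ideal.span {e.toRingEquiv.symm y} := by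
    conv_lhs => rw [← Ideal.map_of_equiv (I := I) e.toRingEquiv]
    rw [hy, Ideal.map_span, Set.image_singleton]
    rfl
  exact key a ha0 hau ⟨e.toRingEquiv.symm y, by rw [Ideal.submodule_span_eq]; exact this⟩
end
end

section
/- Let (R, m) be a local commutative ring which is not a field (more generally, which has a nonzero non-invertible element a such that every zero divisor of R lies in m). Then the ideal I = aR[[X]] + XR[[X]] of R[[X]] is not principal, where a is any nonzero non-unit of R. -/
open CategoryTheory

noncomputable section

open PowerSeries in
/-- if `(R, m)` is local and `a` is a nonzero non-unit of `R`, then the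
ideal `aR[[X]] + XR[[X]]` of `R[[X]]` is not principal. -/
theorem stmt15 (R : Type) [CommRing R] [IsLocalRing R] (a : R) (ha0 : a ≠ 0)
    (ha : ¬ IsUnit a) :
    ¬ (Ideal.span {PowerSeries.C a, PowerSeries.X} :
        Ideal (PowerSeries R)).IsPrincipal := by
  rintro ⟨P, hP⟩
  have hP' : Ideal.span {C a, (X : PowerSeries R)} = Ideal.span {P} := hP
  have hCa : (C a : PowerSeries R) ∈ Ideal.span {P} := by
    rw [← hP']; exact Ideal.subset_span (by simp)
  have hX : (X : PowerSeries R) ∈ Ideal.span {P} := by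
    rw [← hP']; exact Ideal.subset_span (by simp)
  have hPm : P ∈ Ideal.span {C a, (X : PowerSeries R)} := by
    rw [hP]; exact Ideal.subset_span (by simp)
  obtain ⟨f, hf⟩ := Ideal.mem_span_singleton.mp hCa
  obtain ⟨g, hg⟩ := Ideal.mem_span_singleton.mp hX
  obtain ⟨u, v, huv⟩ := Ideal.mem_span_pair.mp hPm
  set p0 := constantCoeff P with hp0
  set f0 := constantCoeff f with hf0
  set g0 := constantCoeff g with hg0def
  set u0 := constantCoeff u with hu0def
  -- a = p0 * f0
  have h1 : a = p0 * f0 := by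
    have := congrArg (constantCoeff) hf
    simpa using this
  have h2 : p0 * g0 = 0 := by
    have := congrArg (constantCoeff) hg
    simpa using this.symm
  have h3 : u0 * a = p0 := by
    have := congrArg (constantCoeff) huv
    simpa using this
  -- f0 * u0 is a unit
  have hu0 : IsUnit u0 := by
    by_contra hfu
    have hmem : u0 * f0 ∈ IsLocalRing.maximalIdeal R :=
      Ideal.mul_mem_right _ _ hfu
    have hunit : IsUnit (1 - u0 * f0) := by
      have := IsLocalRing.isUnit_one_sub_self_of_mem_nonunits _ hmem
      simpa using this
    have hkey : p0 * (1 - u0 * f0) = 0 := by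
      have : p0 = p0 * (u0 * f0) := by
        calc p0 = u0 * a := h3.symm
        _ = u0 * (p0 * f0) := by rw [← h1]
        _ = p0 * (u0 * f0) := by ring
      rw [mul_sub, mul_one, ← this, sub_self]
    have : p0 = 0 := by
      obtain ⟨w, hw⟩ := hunit
      have := congrArg (fun t => t * (↑w⁻¹ : R)) hkey
      simp [mul_assoc, ← hw, Units.mul_inv_cancel_right] at this
      simpa [← hw, mul_assoc] using this
    exact ha0 (by rw [h1, this, zero_mul])
  -- a * g0 = 0
  have h4 : a * g0 = 0 := by
    have : u0 * (a * g0) = 0 := by rw [← mul_assoc, h3, h2]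
    exact (hu0.mul_right_eq_zero).mp this
  -- coefficient 1 of X = P * g
  have h5 : (1 : R) = p0 * coeff 1 g + coeff 1 P * g0 := by
    have := congrArg (coeff 1) hg
    rw [coeff_mul, Finset.Nat.sum_antidiagonal_eq_sum_range_succ_mk] at this
    simp [Finset.sum_range_succ, coeff_zero_eq_constantCoeff] at this
    rw [hp0, hg0def]
    exact this
  have hg0 : IsUnit g0 := by
    have hmem : p0 * coeff 1 g ∈ IsLocalRing.maximalIdeal R := by
      have hpa : p0 ∈ IsLocalRing.maximalIdeal R := by
        rw [← h3]; exact Ideal.mul_mem_left _ _ ha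
      exact Ideal.mul_mem_right _ _ hpa
    have hunit : IsUnit (coeff 1 P * g0) := by
      have : coeff 1 P * g0 = 1 - p0 * coeff 1 g := by
        rw [h5]; ring
      rw [this]
      have := IsLocalRing.isUnit_one_sub_self_of_mem_nonunits _ hmem
      simpa using this
    exact isUnit_of_mul_isUnit_right hunit
  exact ha0 (hg0.mul_right_eq_zero.mp (by rw [mul_comm]; exact h4))
end
end
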